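/- Every compact t-Ahlfors regular set K ⊆ ℝ^d with t > 0 is sub-uniformly distributed. -/

import Mathlib

open MeasureTheory Metric Set
open scoped ENNReal NNReal

noncomputable section

/-- The standard (half-open) dyadic cube of side length `2^{-k}` indexed by `m : Fin d → ℤ`. -/
def dyadicCube (d k : ℕ) (m : Fin d → ℤ) : Set (EuclideanSpace ℝ (Fin d)) :=
  {x | ∀ i, (m i : ℝ) * (2 : ℝ) ^ (-(k : ℤ)) ≤ x i ∧
            x i < ((m i : ℝ) + 1) * (2 : ℝ) ^ (-(k : ℤ))}

/-- The dyadic `2^{-k}`-covering number `|P|_{2^{-k}}`: the number of standard dyadic cubes of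
side length `2^{-k}` intersecting `P`. -/
def covNum (d k : ℕ) (P : Set (EuclideanSpace ℝ (Fin d))) : ℕ :=
  Set.ncard {m : Fin d → ℤ | (dyadicCube d k m ∩ P).Nonempty}

/-- A bounded set `K ⊆ ℝ^d` is sub-uniformly distributed if there is `C > 0` with
`|K|_R · |K ∩ Q|_r ≤ C·|K|_r` for all dyadic scales `r = 2^{-k} ≤ R = 2^{-j}` and every dyadic
`R`-cube `Q` intersecting `K`. -/
def SubUniformlyDistributed {d : ℕ} (K : Set (EuclideanSpace ℝ (Fin d))) : Prop :=
  Bornology.IsBounded K ∧ ∃ C : ℝ, 0 < C ∧ ∀ j k : ℕ, j ≤ k → ∀ m : Fin d → ℤ,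
    (dyadicCube d j m ∩ K).Nonempty →
    (covNum d j K : ℝ) * (covNum d k (K ∩ dyadicCube d j m) : ℝ)
      ≤ C * (covNum d k K : ℝ)


/-- A compact set `K ⊆ ℝ^d` is `t`-Ahlfors regular: there are a Borel measure `μ` with support
`K` (here: `μ` vanishes outside `K` and obeys the lower bound on `K`) and constants
`0 < c ≤ C < ∞` such that `c·r^t ≤ μ(B(x,r)) ≤ C·r^t` for all `x ∈ K` and `0 < r ≤ diam K`. -/
def AhlforsRegular {d : ℕ} (t : ℝ) (K : Set (EuclideanSpace ℝ (Fin d))) : Prop :=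
  ∃ (μ : Measure (EuclideanSpace ℝ (Fin d))) (c C : ℝ), 0 < c ∧ c ≤ C ∧
    μ Kᶜ = 0 ∧
    ∀ x ∈ K, ∀ r : ℝ, 0 < r → r ≤ Metric.diam K →
      ENNReal.ofReal (c * r ^ t) ≤ μ (Metric.closedBall x r) ∧
      μ (Metric.closedBall x r) ≤ ENNReal.ofReal (C * r ^ t)

namespace SUD

variable {d : ℕ}

lemma rpos (k : ℕ) : (0:ℝ) < 2 ^ (-(k:ℤ)) := zpow_pos (by norm_num) _

def idx (d k : ℕ) (x : EuclideanSpace ℝ (Fin d)) : Fin d → ℤ :=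
  fun i => ⌊x i / 2 ^ (-(k:ℤ))⌋

lemma mem_cube_iff_idx {k : ℕ} {x : EuclideanSpace ℝ (Fin d)} {m : Fin d → ℤ} :
    x ∈ dyadicCube d k m ↔ m = idx d k x := by
  constructor
  · intro h; funext i
    obtain ⟨h1, h2⟩ := h i
    symm
    rw [idx, Int.floor_eq_iff]
    exact ⟨(le_div_iff₀ (rpos k)).mpr h1, (div_lt_iff₀ (rpos k)).mpr h2⟩
  · rintro rfl i
    refine ⟨(le_div_iff₀ (rpos k)).mp (Int.floor_le _), (div_lt_iff₀ (rpos k)).mp ?_⟩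
    exact Int.lt_floor_add_one _

lemma mem_cube_idx (k : ℕ) (x : EuclideanSpace ℝ (Fin d)) :
    x ∈ dyadicCube d k (idx d k x) := mem_cube_iff_idx.mpr rfl

lemma cube_disjoint {k : ℕ} {m m' : Fin d → ℤ} (h : m ≠ m') :
    Disjoint (dyadicCube d k m) (dyadicCube d k m') := by
  rw [Set.disjoint_left]
  intro x hx hx'
  exact h ((mem_cube_iff_idx.mp hx).trans (mem_cube_iff_idx.mp hx').symm)

lemma cube_measurable (k : ℕ) (m : Fin d → ℤ) : MeasurableSet (dyadicCube d k m) := by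
  have : dyadicCube d k m = ⋂ i, (fun x : EuclideanSpace ℝ (Fin d) => x i) ⁻¹'
      Set.Ico ((m i:ℝ) * 2^(-(k:ℤ))) (((m i:ℝ)+1) * 2^(-(k:ℤ))) := by
    ext x; simp [dyadicCube, Set.mem_Ico]
  rw [this]
  exact MeasurableSet.iInter fun i =>
    (by fun_prop : Measurable fun x : EuclideanSpace ℝ (Fin d) => x i) measurableSet_Ico

lemma abs_coord_le_dist (x y : EuclideanSpace ℝ (Fin d)) (i : Fin d) :
    |x i - y i| ≤ dist x y := by
  rw [EuclideanSpace.dist_eq, show |x i - y i| = Real.sqrt (|x i - y i|^2) by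
    rw [Real.sqrt_sq (abs_nonneg _)]]
  apply Real.sqrt_le_sqrt
  calc |x i - y i|^2 = dist (x i) (y i)^2 := by rw [Real.dist_eq]
  _ ≤ _ := Finset.single_le_sum (f := fun j => dist (x j) (y j)^2)
    (fun j _ => sq_nonneg _) (Finset.mem_univ i)

lemma cube_dist_le {k : ℕ} {m : Fin d → ℤ} {x y : EuclideanSpace ℝ (Fin d)}
    (hx : x ∈ dyadicCube d k m) (hy : y ∈ dyadicCube d k m) :
    dist x y ≤ d * 2^(-(k:ℤ)) := by
  have hr := rpos k
  set r := (2:ℝ)^(-(k:ℤ)) with hrdef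
  have key : ∀ i, dist (x i) (y i) ^ 2 ≤ r^2 := by
    intro i
    obtain ⟨hx1, hx2⟩ := hx i; obtain ⟨hy1, hy2⟩ := hy i
    have habs : |x i - y i| ≤ r := by
      rw [abs_sub_le_iff]; constructor <;> nlinarith
    rw [Real.dist_eq]
    nlinarith [abs_nonneg (x i - y i)]
  have hdd : (d:ℝ) ≤ (d:ℝ)^2 := by
    have : d ≤ d^2 := Nat.le_self_pow two_ne_zero d
    exact_mod_cast this
  rw [EuclideanSpace.dist_eq]
  calc Real.sqrt (∑ i, dist (x i) (y i)^2) ≤ Real.sqrt (((d:ℝ)*r)^2) := by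
        apply Real.sqrt_le_sqrt
        calc ∑ i, dist (x i) (y i)^2 ≤ ∑ _i : Fin d, r^2 :=
              Finset.sum_le_sum fun i _ => key i
        _ = (d:ℝ) * r^2 := by rw [Finset.sum_const]; simp [nsmul_eq_mul]
        _ ≤ ((d:ℝ)*r)^2 := by nlinarith
  _ = (d:ℝ) * r := Real.sqrt_sq (by positivity)

def E3 (d : ℕ) : Finset (Fin d → ℤ) := Fintype.piFinset fun _ => Finset.Icc (-1) 1

lemma card_E3 : (E3 d).card = 3^d := by
  rw [E3, Fintype.card_piFinset]
  simp [Int.card_Icc]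

lemma ball_subset {k : ℕ} {n : Fin d → ℤ} {x : EuclideanSpace ℝ (Fin d)}
    (hx : x ∈ dyadicCube d k n) :
    closedBall x (2^(-(k:ℤ))) ⊆ ⋃ e ∈ E3 d, dyadicCube d k (n + e) := by
  intro y hy
  have hr := rpos k
  set r := (2:ℝ)^(-(k:ℤ)) with hrdef
  have hyx : dist y x ≤ r := mem_closedBall.mp hy
  refine Set.mem_iUnion₂.mpr ⟨idx d k y - n, ?_, ?_⟩
  · simp only [E3, Fintype.mem_piFinset]
    intro i
    obtain ⟨hx1, hx2⟩ := hx i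
    have hco : |y i - x i| ≤ r := (abs_coord_le_dist y x i).trans hyx
    rw [abs_sub_le_iff] at hco
    rw [Finset.mem_Icc]
    constructor
    · have h1 : ((n i : ℝ) - 1) ≤ y i / r := by
        rw [le_div_iff₀ hr]; nlinarith
      have : (n i - 1 : ℤ) ≤ ⌊y i / r⌋ := Int.le_floor.mpr (by push_cast; exact h1)
      simp only [Pi.sub_apply, idx]
      rw [← hrdef]
      omega
    · have h2 : y i / r < (n i : ℝ) + 2 := by
        rw [div_lt_iff₀ hr]; nlinarith
      have : ⌊y i / r⌋ < n i + 2 := Int.floor_lt.mpr (by push_cast; exact h2)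
      simp only [Pi.sub_apply, idx]
      rw [← hrdef]
      omega
  · have : n + (idx d k y - n) = idx d k y := by ring
    rw [this]
    exact mem_cube_idx k y

lemma pack (μ : Measure (EuclideanSpace ℝ (Fin d))) (k : ℕ) (F : Finset (Fin d → ℤ))
    (x : (Fin d → ℤ) → EuclideanSpace ℝ (Fin d))
    (hx : ∀ n ∈ F, x n ∈ dyadicCube d k n) {T : Set (EuclideanSpace ℝ (Fin d))}
    (hT : MeasurableSet T)
    (hsub : ∀ n ∈ F, closedBall (x n) (2^(-(k:ℤ))) ⊆ T) :
    ∑ n ∈ F, μ (closedBall (x n) (2^(-(k:ℤ)))) ≤ 3^d * μ T := by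
  have step1 : ∀ n ∈ F, μ (closedBall (x n) (2^(-(k:ℤ)))) ≤
      ∑ e ∈ E3 d, μ (dyadicCube d k (n+e) ∩ T) := by
    intro n hn
    have hsub2 : closedBall (x n) (2^(-(k:ℤ))) ⊆ ⋃ e ∈ E3 d, (dyadicCube d k (n+e) ∩ T) := by
      intro y hy
      obtain ⟨e, he, hye⟩ := Set.mem_iUnion₂.mp (ball_subset (hx n hn) hy)
      exact Set.mem_iUnion₂.mpr ⟨e, he, hye, hsub n hn hy⟩
    exact (measure_mono hsub2).trans (measure_biUnion_finset_le _ _)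
  calc ∑ n ∈ F, μ (closedBall (x n) (2^(-(k:ℤ))))
      ≤ ∑ n ∈ F, ∑ e ∈ E3 d, μ (dyadicCube d k (n+e) ∩ T) := Finset.sum_le_sum step1
  _ = ∑ e ∈ E3 d, ∑ n ∈ F, μ (dyadicCube d k (n+e) ∩ T) := Finset.sum_comm
  _ ≤ ∑ _e ∈ E3 d, μ T := by
      apply Finset.sum_le_sum
      intro e _
      rw [← measure_biUnion_finset]
      · exact measure_mono (Set.iUnion₂_subset fun n _ => Set.inter_subset_right)
      · intro n _ n' _ hne
        exact ((cube_disjoint (fun h => hne (add_right_cancel h))).mono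
          Set.inter_subset_left Set.inter_subset_left)
      · exact fun n _ => (cube_measurable _ _).inter hT
  _ = 3^d * μ T := by
      rw [Finset.sum_const, card_E3, nsmul_eq_mul]
      push_cast
      ring

lemma idxSet_finite (k : ℕ) {P : Set (EuclideanSpace ℝ (Fin d))}
    (hP : Bornology.IsBounded P) :
    {m : Fin d → ℤ | (dyadicCube d k m ∩ P).Nonempty}.Finite := by
  obtain ⟨ρ, hρ⟩ := hP.subset_closedBall 0
  have hr := rpos k
  set r := (2:ℝ)^(-(k:ℤ)) with hrdef
  apply Set.Finite.subset (Set.Finite.pi (t := fun _ : Fin d => Set.Icc (⌈-ρ/r⌉ - 1) ⌊ρ/r⌋)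
    fun _ => Set.finite_Icc _ _)
  rintro m ⟨x, hxc, hxP⟩
  have hx : dist x 0 ≤ ρ := hρ hxP
  intro i _
  obtain ⟨h1, h2⟩ := hxc i
  have hco : |x i| ≤ ρ := by
    have := abs_coord_le_dist x 0 i
    simp only [show (0:EuclideanSpace ℝ (Fin d)) i = 0 from rfl, sub_zero] at this
    linarith
  rw [abs_le] at hco
  constructor
  · have : (-ρ/r : ℝ) ≤ (m i : ℝ) + 1 := by
      rw [div_le_iff₀ hr]; nlinarith
    have h3 : (⌈-ρ/r⌉ : ℤ) ≤ m i + 1 := Int.ceil_le.mpr (by push_cast; linarith)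
    omega
  · apply Int.le_floor.mpr
    rw [le_div_iff₀ hr]; nlinarith

lemma covNum_singleton (k : ℕ) (x : EuclideanSpace ℝ (Fin d)) :
    Set.ncard {m : Fin d → ℤ | (dyadicCube d k m ∩ {x}).Nonempty} = 1 := by
  have : {m : Fin d → ℤ | (dyadicCube d k m ∩ {x}).Nonempty} = {idx d k x} := by
    ext m
    simp only [Set.mem_setOf_eq, Set.mem_singleton_iff, Set.inter_singleton_nonempty]
    exact mem_cube_iff_idx
  rw [this, Set.ncard_singleton]

lemma setOf_mem_cube (k : ℕ) (x : EuclideanSpace ℝ (Fin d)) :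
    {m : Fin d → ℤ | x ∈ dyadicCube d k m} = {idx d k x} := by
  ext m
  simpa using mem_cube_iff_idx (x := x) (m := m)

end SUD

theorem statement19 (d : ℕ) (t : ℝ) (ht : 0 < t)
    (K : Set (EuclideanSpace ℝ (Fin d))) (hK : IsCompact K)
    (hreg : AhlforsRegular t K) :
    SubUniformlyDistributed K := by
  classical
  obtain ⟨μ, c, C, hc, hcC, hμKc, hball⟩ := hreg
  have hC : (0:ℝ) < C := hc.trans_le hcC
  have hKb : Bornology.IsBounded K := hK.isBounded
  refine ⟨hKb, ?_⟩
  by_cases hnt : K.Nontrivial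
  swap
  · -- subsingleton case
    refine ⟨1, one_pos, ?_⟩
    intro j k hjk m hQ
    obtain ⟨x, hxQ, hxK⟩ := hQ
    have hsing : K = {x} := (Set.not_nontrivial_iff.mp hnt).eq_singleton_of_mem hxK
    have h1 : ({x} : Set (EuclideanSpace ℝ (Fin d))) ∩ dyadicCube d j m = {x} :=
      Set.inter_eq_self_of_subset_left (Set.singleton_subset_iff.mpr hxQ)
    rw [hsing, h1]
    unfold covNum
    simp [SUD.covNum_singleton, SUD.setOf_mem_cube, Set.ncard_singleton]
  · -- main case
    have hD : 0 < Metric.diam K := by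
      obtain ⟨p, hp, q, hq, hpq⟩ := hnt
      calc (0:ℝ) < dist p q := dist_pos.mpr hpq
      _ ≤ _ := Metric.dist_le_diam_of_mem hKb hp hq
    set D := Metric.diam K with hDdef
    have hKsub : ∀ x ∈ K, K ⊆ closedBall x D := fun x hx y hy =>
      mem_closedBall.mpr (Metric.dist_le_diam_of_mem hKb hy hx)
    have huniv : ∀ s : Set (EuclideanSpace ℝ (Fin d)), μ s ≤ μ K := by
      intro s
      calc μ s ≤ μ (K ∪ Kᶜ) := measure_mono (by simp)
      _ ≤ μ K + μ Kᶜ := measure_union_le _ _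
      _ = μ K := by rw [hμKc, add_zero]
    have upper : ∀ x ∈ K, ∀ ρ : ℝ, 0 < ρ →
        μ (closedBall x ρ) ≤ ENNReal.ofReal (C * ρ^t) := by
      intro x hx ρ hρ
      rcases le_or_gt ρ D with h | h
      · exact (hball x hx ρ hρ h).2
      · calc μ (closedBall x ρ) ≤ μ K := huniv _
        _ ≤ μ (closedBall x D) := measure_mono (hKsub x hx)
        _ ≤ ENNReal.ofReal (C * D^t) := (hball x hx D hD le_rfl).2
        _ ≤ ENNReal.ofReal (C * ρ^t) := ENNReal.ofReal_le_ofReal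
            (mul_le_mul_of_nonneg_left (Real.rpow_le_rpow hD.le h.le ht.le) hC.le)
    have hmin : (0:ℝ) < min D 1 := lt_min hD one_pos
    set c' := c * min D 1 ^ t with hc'def
    have hmint : (0:ℝ) < min D 1 ^ t := Real.rpow_pos_of_pos hmin t
    have hc' : 0 < c' := mul_pos hc hmint
    have lower : ∀ x ∈ K, ∀ ρ : ℝ, 0 < ρ → ρ ≤ 1 →
        ENNReal.ofReal (c' * ρ^t) ≤ μ (closedBall x ρ) := by
      intro x hx ρ hρ hρ1
      have hρt : (0:ℝ) < ρ^t := Real.rpow_pos_of_pos hρ t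
      rcases le_or_gt ρ D with h | h
      · refine le_trans (ENNReal.ofReal_le_ofReal ?_) (hball x hx ρ hρ h).1
        have h1 : min D 1 ^ t ≤ 1 := Real.rpow_le_one hmin.le (min_le_right _ _) ht.le
        rw [hc'def]
        nlinarith [mul_le_mul_of_nonneg_left h1 (mul_nonneg hc.le hρt.le)]
      · refine le_trans (ENNReal.ofReal_le_ofReal ?_)
          ((hball x hx D hD le_rfl).1.trans
            (measure_mono (closedBall_subset_closedBall h.le)))
        have h1 : ρ^t ≤ 1 := Real.rpow_le_one hρ.le hρ1 ht.le
        have h2 : min D 1 ^ t ≤ D^t := Real.rpow_le_rpow hmin.le (min_le_left _ _) ht.le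
        have h3 : (0:ℝ) < D^t := Real.rpow_pos_of_pos hD t
        rw [hc'def]
        nlinarith [mul_le_mul_of_nonneg_left
          (mul_le_mul h2 h1 hρt.le h3.le) hc.le]
    have hMfin : μ Set.univ ≠ ⊤ := by
      obtain ⟨p, hp, -⟩ := hnt
      have : μ Set.univ ≤ ENNReal.ofReal (C * D^t) :=
        (huniv _).trans ((measure_mono (hKsub p hp)).trans (hball p hp D hD le_rfl).2)
      exact ne_top_of_le_ne_top ENNReal.ofReal_ne_top this
    set K1 := C * ((d:ℝ)+1)^t with hK1def
    have hdpos : (0:ℝ) < (d:ℝ) + 1 := by positivity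
    have hK1 : (0:ℝ) < K1 := mul_pos hC (Real.rpow_pos_of_pos hdpos t)
    refine ⟨9^d * K1^2 / c'^2,
      div_pos (mul_pos (pow_pos (by norm_num) d) (pow_pos hK1 2)) (pow_pos hc' 2), ?_⟩
    intro j k hjk m hQ
    have hRpos : (0:ℝ) < 2^(-(j:ℤ)) := SUD.rpos j
    have hrpos : (0:ℝ) < 2^(-(k:ℤ)) := SUD.rpos k
    set R := (2:ℝ)^(-(j:ℤ)) with hRdef
    set r := (2:ℝ)^(-(k:ℤ)) with hrdef
    have hrR : r ≤ R := by
      rw [hrdef, hRdef]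
      apply zpow_le_zpow_right₀ one_le_two
      omega
    have hR1 : R ≤ 1 := by
      rw [hRdef, show (1:ℝ) = 2^(0:ℤ) by norm_num]
      apply zpow_le_zpow_right₀ one_le_two
      omega
    have hr1 : r ≤ 1 := hrR.trans hR1
    have hRt : (0:ℝ) < R^t := Real.rpow_pos_of_pos hRpos t
    have hrt : (0:ℝ) < r^t := Real.rpow_pos_of_pos hrpos t
    -- finite index sets
    have hSj := SUD.idxSet_finite j hKb
    have hSk := SUD.idxSet_finite k hKb
    have hQb : Bornology.IsBounded (K ∩ dyadicCube d j m) :=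
      hKb.subset Set.inter_subset_left
    have hSQ := SUD.idxSet_finite k hQb
    -- choice functions
    set xj : (Fin d → ℤ) → EuclideanSpace ℝ (Fin d) := fun n =>
      if h : (dyadicCube d j n ∩ K).Nonempty then h.some else 0 with hxjdef
    have hxj : ∀ n ∈ hSj.toFinset, xj n ∈ dyadicCube d j n ∩ K := by
      intro n hn
      have h : (dyadicCube d j n ∩ K).Nonempty := hSj.mem_toFinset.mp hn
      simp only [hxjdef, dif_pos h]
      exact h.some_mem
    set xk : (Fin d → ℤ) → EuclideanSpace ℝ (Fin d) := fun n =>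
      if h : (dyadicCube d k n ∩ K).Nonempty then h.some else 0 with hxkdef
    have hxk : ∀ n ∈ hSk.toFinset, xk n ∈ dyadicCube d k n ∩ K := by
      intro n hn
      have h : (dyadicCube d k n ∩ K).Nonempty := hSk.mem_toFinset.mp hn
      simp only [hxkdef, dif_pos h]
      exact h.some_mem
    set xQ : (Fin d → ℤ) → EuclideanSpace ℝ (Fin d) := fun n =>
      if h : (dyadicCube d k n ∩ (K ∩ dyadicCube d j m)).Nonempty then h.some else 0 with hxQdef
    have hxQ : ∀ n ∈ hSQ.toFinset, xQ n ∈ dyadicCube d k n ∩ (K ∩ dyadicCube d j m) := by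
      intro n hn
      have h : (dyadicCube d k n ∩ (K ∩ dyadicCube d j m)).Nonempty :=
        hSQ.mem_toFinset.mp hn
      simp only [hxQdef, dif_pos h]
      exact h.some_mem
    obtain ⟨x₀, hx₀Q, hx₀K⟩ := hQ
    -- estimate 1
    have e1 : ENNReal.ofReal (c' * R^t) * hSj.toFinset.card ≤ 3^d * μ Set.univ := by
      calc ENNReal.ofReal (c' * R^t) * hSj.toFinset.card
          = ∑ _n ∈ hSj.toFinset, ENNReal.ofReal (c' * R^t) := by
            rw [Finset.sum_const, nsmul_eq_mul, mul_comm]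
      _ ≤ ∑ n ∈ hSj.toFinset, μ (closedBall (xj n) R) :=
            Finset.sum_le_sum fun n hn => lower (xj n) (hxj n hn).2 R hRpos hR1
      _ ≤ 3^d * μ Set.univ :=
            SUD.pack μ j hSj.toFinset xj (fun n hn => (hxj n hn).1)
              MeasurableSet.univ (fun n _ => Set.subset_univ _)
    -- estimate 2
    have hsubQ : ∀ n ∈ hSQ.toFinset,
        closedBall (xQ n) r ⊆ closedBall x₀ (((d:ℝ)+1)*R) := by
      intro n hn y hy
      have h1 : dist y (xQ n) ≤ r := mem_closedBall.mp hy
      have h2 : dist (xQ n) x₀ ≤ (d:ℝ) * R := SUD.cube_dist_le (hxQ n hn).2.2 hx₀Q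
      have h3 := dist_triangle y (xQ n) x₀
      rw [mem_closedBall]
      nlinarith
    have e2 : ENNReal.ofReal (c' * r^t) * hSQ.toFinset.card ≤
        3^d * ENNReal.ofReal (K1 * R^t) := by
      calc ENNReal.ofReal (c' * r^t) * hSQ.toFinset.card
          = ∑ _n ∈ hSQ.toFinset, ENNReal.ofReal (c' * r^t) := by
            rw [Finset.sum_const, nsmul_eq_mul, mul_comm]
      _ ≤ ∑ n ∈ hSQ.toFinset, μ (closedBall (xQ n) r) :=
            Finset.sum_le_sum fun n hn => lower (xQ n) (hxQ n hn).2.1 r hrpos hr1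
      _ ≤ 3^d * μ (closedBall x₀ (((d:ℝ)+1)*R)) :=
            SUD.pack μ k hSQ.toFinset xQ (fun n hn => (hxQ n hn).1)
              measurableSet_closedBall hsubQ
      _ ≤ 3^d * ENNReal.ofReal (K1 * R^t) := by
            apply mul_le_mul_right
            refine (upper x₀ hx₀K _ (by positivity)).trans (ENNReal.ofReal_le_ofReal ?_)
            rw [hK1def, Real.mul_rpow hdpos.le hRpos.le]
            ring_nf
            exact le_refl _
    -- estimate 3
    have e3 : μ Set.univ ≤ hSk.toFinset.card * ENNReal.ofReal (K1 * r^t) := by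
      have hcov : K ⊆ ⋃ n ∈ hSk.toFinset, dyadicCube d k n := by
        intro x hx
        refine Set.mem_iUnion₂.mpr ⟨SUD.idx d k x, ?_, SUD.mem_cube_idx k x⟩
        rw [Set.Finite.mem_toFinset]
        exact ⟨x, SUD.mem_cube_idx k x, hx⟩
      calc μ Set.univ ≤ μ K := huniv _
      _ ≤ ∑ n ∈ hSk.toFinset, μ (dyadicCube d k n) :=
          (measure_mono hcov).trans (measure_biUnion_finset_le _ _)
      _ ≤ ∑ _n ∈ hSk.toFinset, ENNReal.ofReal (K1 * r^t) := by
          apply Finset.sum_le_sum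
          intro n hn
          have hcb : dyadicCube d k n ⊆ closedBall (xk n) (((d:ℝ)+1)*r) := by
            intro y hy
            rw [mem_closedBall]
            have := SUD.cube_dist_le hy (hxk n hn).1
            nlinarith
          refine (measure_mono hcb).trans ?_
          refine (upper (xk n) (hxk n hn).2 _ (by positivity)).trans
            (ENNReal.ofReal_le_ofReal ?_)
          rw [hK1def, Real.mul_rpow hdpos.le hrpos.le]
          ring_nf
          exact le_refl _
      _ = hSk.toFinset.card * ENNReal.ofReal (K1 * r^t) := by
          rw [Finset.sum_const, nsmul_eq_mul]
    -- convert to real inequalities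
    have h3top : ((3:ℝ≥0∞)^d) ≠ ⊤ := ENNReal.pow_ne_top (by norm_num)
    have r1 : c' * R^t * hSj.toFinset.card ≤ 3^d * (μ Set.univ).toReal := by
      have := ENNReal.toReal_mono (ENNReal.mul_ne_top h3top hMfin) e1
      rw [ENNReal.toReal_mul, ENNReal.toReal_mul, ENNReal.toReal_ofReal (by positivity),
        ENNReal.toReal_pow, ENNReal.toReal_ofNat] at this
      exact this
    have r2 : c' * r^t * hSQ.toFinset.card ≤ 3^d * (K1 * R^t) := by
      have := ENNReal.toReal_mono (ENNReal.mul_ne_top h3top ENNReal.ofReal_ne_top) e2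
      rw [ENNReal.toReal_mul, ENNReal.toReal_mul, ENNReal.toReal_ofReal (by positivity),
        ENNReal.toReal_pow, ENNReal.toReal_ofNat,
        ENNReal.toReal_ofReal (by positivity)] at this
      exact this
    have r3 : (μ Set.univ).toReal ≤ hSk.toFinset.card * (K1 * r^t) := by
      have := ENNReal.toReal_mono
        (ENNReal.mul_ne_top (ENNReal.natCast_ne_top _) ENNReal.ofReal_ne_top) e3
      rw [ENNReal.toReal_mul,
        ENNReal.toReal_ofReal (by positivity)] at this
      exact this
    -- rewrite covNum in terms of card
    have gj : covNum d j K = hSj.toFinset.card := Set.ncard_eq_toFinset_card _ hSj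
    have gk : covNum d k K = hSk.toFinset.card := Set.ncard_eq_toFinset_card _ hSk
    have gQ : covNum d k (K ∩ dyadicCube d j m) = hSQ.toFinset.card :=
      Set.ncard_eq_toFinset_card _ hSQ
    rw [gj, gk, gQ]
    set A := (hSj.toFinset.card : ℝ)
    set B := (hSQ.toFinset.card : ℝ)
    set F := (hSk.toFinset.card : ℝ)
    have hA : (0:ℝ) ≤ A := Nat.cast_nonneg _
    have hB : (0:ℝ) ≤ B := Nat.cast_nonneg _
    have hF : (0:ℝ) ≤ F := Nat.cast_nonneg _
    set M := (μ Set.univ).toReal with hMdef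
    have hM : (0:ℝ) ≤ M := ENNReal.toReal_nonneg
    have h12 : (c' * R^t * A) * (c' * r^t * B) ≤ (3^d * M) * (3^d * (K1 * R^t)) :=
      mul_le_mul r1 r2 (by positivity) (by positivity)
    have h3 : (3^d * M) * (3^d * (K1*R^t)) ≤ ((3:ℝ)^d * (F * (K1*r^t))) * (3^d * (K1*R^t)) := by
      apply mul_le_mul_of_nonneg_right _ (by positivity)
      apply mul_le_mul_of_nonneg_left r3 (by positivity)
    have h33 : (3:ℝ)^d * 3^d = 9^d := by rw [← mul_pow]; norm_num
    have hkey : (R^t*r^t) * (A * B * c'^2) ≤ (R^t*r^t) * (9^d*K1^2*F) := by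
      calc (R^t*r^t) * (A * B * c'^2) = (c' * R^t * A) * (c' * r^t * B) := by ring
      _ ≤ ((3:ℝ)^d * (F * (K1*r^t))) * (3^d * (K1*R^t)) := h12.trans h3
      _ = ((3:ℝ)^d * 3^d) * (K1^2*F) * (R^t*r^t) := by ring
      _ = (R^t*r^t) * (9^d*K1^2*F) := by rw [h33]; ring
    have hkey2 : A * B * c'^2 ≤ 9^d*K1^2*F :=
      le_of_mul_le_mul_left hkey (mul_pos hRt hrt)
    rw [div_mul_eq_mul_div, le_div_iff₀ (pow_pos hc' 2)]
    exact hkey2
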